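/- (Lemma 1, case d > k/2.) Let k ≥ 1, 1 ≤ s ≤ k/2, and k/2 < d ≤ k-1. Set κ(s) = (k-s+1)/(2s+1), α' = (d+1)/(k-d), and I_d = Σ_{i even, i ≤ d} C(s,i)C(k-s,d-i). Then I_d ≤ (1 - 2s/(5α'))·C(k,d) if d > k - κ(s), and I_d ≤ (4/5)·C(k,d) if d ≤ k - κ(s). -/

import Mathlib

open Finset

private lemma aux2 (p P q Q : ℕ) (hP : P ≤ 4*p) (hQ : Q ≤ 4*q) : P*Q ≤ 2*(q*Q + p*P) := by
  have hP' : (P:ℝ) ≤ 4*p := by exact_mod_cast hP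
  have hQ' : (Q:ℝ) ≤ 4*q := by exact_mod_cast hQ
  have hPn : (0:ℝ) ≤ P := Nat.cast_nonneg _
  have hQn : (0:ℝ) ≤ Q := Nat.cast_nonneg _
  have hpn : (0:ℝ) ≤ p := Nat.cast_nonneg _
  have hqn : (0:ℝ) ≤ q := Nat.cast_nonneg _
  have hPQ : (P:ℝ)*Q ≤ 16*(p*q) := by nlinarith
  have h16 : (P:ℝ)*Q*(P*Q) ≤ 16*(p*q)*(P*Q) :=
    mul_le_mul_of_nonneg_right hPQ (mul_nonneg hPn hQn)
  have hS : (0:ℝ) ≤ (q:ℝ)*Q + p*P := by positivity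
  have hPQ0 : (0:ℝ) ≤ (P:ℝ)*Q := mul_nonneg hPn hQn
  have key : (P:ℝ)*Q ≤ 2*(q*Q + p*P) := by
    nlinarith [h16, sq_nonneg ((q:ℝ)*Q - p*P), hS, hPQ0]
  exact_mod_cast key

private lemma aux_poly (a b x y : ℕ) (h1 : y + b + 1 ≤ (x+b)*(2*x+2*a+1)) (h2 : x+b+1 ≤ y+a)
    (h4 : 1 ≤ x+b) (h5 : x+a ≤ y+b) (h6 : x+1 ≤ y) :
    (x+1)*(y+1)*((a+1)*(b+1)) ≤ 2*(a*b*((a+1)*(b+1)) + x*y*((x+1)*(y+1))) := by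
  rcases Nat.eq_zero_or_pos x with hx | hx
  · subst hx
    have hy : y + 1 ≤ 2*(a*b) := by nlinarith
    calc (0+1)*(y+1)*((a+1)*(b+1)) = (y+1)*((a+1)*(b+1)) := by ring
      _ ≤ (2*(a*b))*((a+1)*(b+1)) := Nat.mul_le_mul_right _ hy
      _ = 2*(a*b*((a+1)*(b+1))) := by ring
      _ ≤ 2*(a*b*((a+1)*(b+1)) + 0*y*((0+1)*(y+1))) := by omega
  rcases Nat.eq_zero_or_pos a with ha | ha
  · subst ha
    have hy : b + 1 ≤ 2*(x*y) := by nlinarith [Nat.le_mul_of_pos_left y hx]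
    calc (x+1)*(y+1)*((0+1)*(b+1)) = (b+1)*((x+1)*(y+1)) := by ring
      _ ≤ (2*(x*y))*((x+1)*(y+1)) := Nat.mul_le_mul_right _ hy
      _ = 2*(x*y*((x+1)*(y+1))) := by ring
      _ ≤ 2*(0*b*((0+1)*(b+1)) + x*y*((x+1)*(y+1))) := by omega
  rcases Nat.eq_zero_or_pos b with hb | hb
  · subst hb
    have hy : a + 1 ≤ 2*(x*y) := by nlinarith [Nat.le_mul_of_pos_left y hx]
    calc (x+1)*(y+1)*((a+1)*(0+1)) = (a+1)*((x+1)*(y+1)) := by ring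
      _ ≤ (2*(x*y))*((x+1)*(y+1)) := Nat.mul_le_mul_right _ hy
      _ = 2*(x*y*((x+1)*(y+1))) := by ring
      _ ≤ 2*(a*0*((a+1)*(0+1)) + x*y*((x+1)*(y+1))) := by omega
  have hy : 1 ≤ y := by omega
  have hP : (x+1)*(y+1) ≤ 4*(x*y) := by nlinarith
  have hQ : (a+1)*(b+1) ≤ 4*(a*b) := by nlinarith
  have h := aux2 (x*y) ((x+1)*(y+1)) (a*b) ((a+1)*(b+1)) hP hQ
  omega

private lemma pointwise_core (a x y b : ℕ)
    (hc1 : y + b + 2 ≤ (x+b)*(2*x+2*(a+1)+1))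
    (hc2 : x+b+1 ≤ y+a+2) (hc4 : 1 ≤ x+b) (hc5 : x+a ≤ y+b) (hc6 : x ≤ y) :
    (a+1+x).choose (a+1) * (y+1+b).choose (y+1) ≤
      2*((a+1+x).choose a * (y+1+b).choose (y+2) +
         (a+1+x).choose (a+2) * (y+1+b).choose y) := by
  set m := a+1+x with hm
  set n := y+1+b with hn
  have e1 : m.choose (a+2) * (a+2) = m.choose (a+1) * x := by
    have := Nat.choose_succ_right_eq m (a+1)
    rwa [show m - (a+1) = x by omega] at this
  have e2 : n.choose (y+1) * (y+1) = n.choose y * (b+1) := by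
    have := Nat.choose_succ_right_eq n y
    rwa [show n - y = b+1 by omega] at this
  have e3 : m.choose (a+1) * (a+1) = m.choose a * (x+1) := by
    have := Nat.choose_succ_right_eq m a
    rwa [show m - a = x+1 by omega] at this
  have e4 : n.choose (y+2) * (y+2) = n.choose (y+1) * b := by
    have := Nat.choose_succ_right_eq n (y+1)
    rwa [show n - (y+1) = b by omega] at this
  have idA : m.choose (a+2) * n.choose y * ((a+2)*(b+1)) =
      m.choose (a+1) * n.choose (y+1) * (x*(y+1)) := by
    calc m.choose (a+2) * n.choose y * ((a+2)*(b+1))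
        = (m.choose (a+2) * (a+2)) * (n.choose y * (b+1)) := by ring
      _ = (m.choose (a+1) * x) * (n.choose (y+1) * (y+1)) := by rw [e1, ← e2]
      _ = m.choose (a+1) * n.choose (y+1) * (x*(y+1)) := by ring
  have idB : m.choose a * n.choose (y+2) * ((x+1)*(y+2)) =
      m.choose (a+1) * n.choose (y+1) * ((a+1)*b) := by
    calc m.choose a * n.choose (y+2) * ((x+1)*(y+2))
        = (m.choose a * (x+1)) * (n.choose (y+2) * (y+2)) := by ring
      _ = (m.choose (a+1) * (a+1)) * (n.choose (y+1) * b) := by rw [← e3, e4]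
      _ = m.choose (a+1) * n.choose (y+1) * ((a+1)*b) := by ring
  have hpoly := aux_poly (a+1) b x (y+1) (by omega) (by omega) (by omega) (by omega) (by omega)
  have hmul : m.choose (a+1) * n.choose (y+1) * ((x+1)*(y+2)*((a+2)*(b+1))) ≤
      (2*(m.choose a * n.choose (y+2) + m.choose (a+2) * n.choose y)) *
        ((x+1)*(y+2)*((a+2)*(b+1))) := by
    calc m.choose (a+1) * n.choose (y+1) * ((x+1)*(y+2)*((a+2)*(b+1)))
        ≤ m.choose (a+1) * n.choose (y+1) *
            (2*((a+1)*b*((a+2)*(b+1)) + x*(y+1)*((x+1)*(y+2)))) := by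
          apply Nat.mul_le_mul_left
          simpa using hpoly
      _ = 2*((m.choose (a+1) * n.choose (y+1) * ((a+1)*b))*((a+2)*(b+1)) +
             (m.choose (a+1) * n.choose (y+1) * (x*(y+1)))*((x+1)*(y+2))) := by ring
      _ = 2*((m.choose a * n.choose (y+2) * ((x+1)*(y+2)))*((a+2)*(b+1)) +
             (m.choose (a+2) * n.choose y * ((a+2)*(b+1)))*((x+1)*(y+2))) := by
          rw [idA, idB]
      _ = (2*(m.choose a * n.choose (y+2) + m.choose (a+2) * n.choose y)) *
            ((x+1)*(y+2)*((a+2)*(b+1))) := by ring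
  exact Nat.le_of_mul_le_mul_right hmul (by positivity)

private lemma pointwise_zero_core (x y b : ℕ) (hx : 1 ≤ x) (hyb : x + b ≤ y) :
    (y+1+b).choose (y+1) ≤ 2*(x * (y+1+b).choose y) := by
  have e2 : (y+1+b).choose (y+1) * (y+1) = (y+1+b).choose y * (b+1) := by
    have := Nat.choose_succ_right_eq (y+1+b) y
    rwa [show (y+1+b) - y = b+1 by omega] at this
  have hb : (b+1) ≤ 2*x*(y+1) := by nlinarith
  have h : (y+1+b).choose (y+1) * (y+1) ≤ (2*(x * (y+1+b).choose y)) * (y+1) := by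
    rw [e2]
    calc (y+1+b).choose y * (b+1) ≤ (y+1+b).choose y * (2*x*(y+1)) :=
          Nat.mul_le_mul_left _ hb
      _ = (2*(x * (y+1+b).choose y)) * (y+1) := by ring
  exact Nat.le_of_mul_le_mul_right h (by omega)

/-- pointwise bound, interior index -/
private lemma pointwise_nat (k d s : ℕ) (hs : 1 ≤ s) (h2s : 2*s ≤ k) (h2d : k+1 ≤ 2*d)
    (hd1 : d+1 ≤ k) (hc2 : k + 1 ≤ (k-d)*(2*s+1) + s) (i : ℕ) (hi : 1 ≤ i) :
    s.choose i * (k-s).choose (d-i) ≤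
      2*(s.choose (i-1) * (k-s).choose (d-(i-1)) + s.choose (i+1) * (k-s).choose (d-(i+1))) := by
  by_cases h0 : s.choose i * (k-s).choose (d-i) = 0
  · rw [h0]; exact Nat.zero_le _
  have his : i ≤ s := by
    by_contra h
    exact h0 (by rw [Nat.choose_eq_zero_of_lt (show s < i by omega), zero_mul])
  have hdik : d - i ≤ k - s := by
    by_contra h
    exact h0 (by rw [Nat.choose_eq_zero_of_lt (show k - s < d - i by omega), mul_zero])
  have hsd : s < d := by omega
  obtain ⟨a, rfl⟩ : ∃ a, i = a + 1 := ⟨i-1, by omega⟩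
  obtain ⟨x, rfl⟩ : ∃ x, s = a + 1 + x := ⟨s-(a+1), by omega⟩
  obtain ⟨y, rfl⟩ : ∃ y, d = (a+1) + (y+1) := ⟨d-(a+1)-1, by omega⟩
  obtain ⟨b, rfl⟩ : ∃ b, k = (a+1+x) + (y+1) + b :=
    ⟨k - (a+1+x) - (y+1), by omega⟩
  have r1 : (a+1+x) + (y+1) + b - (a+1+x) = y+1+b := by omega
  have r2 : (a+1) + (y+1) - (a+1) = y+1 := by omega
  have r3 : (a+1) - 1 = a := by omega
  have r4 : (a+1) + (y+1) - a = y+2 := by omega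
  have r5 : (a+1) + (y+1) - ((a+1)+1) = y := by omega
  rw [r1, r2, r3, r4, r5]
  have hprod : ((a+1+x) + (y+1) + b - ((a+1)+(y+1)))*(2*(a+1+x)+1)
      = (x+b)*(2*x+2*(a+1)+1) := by
    rw [show (a+1+x) + (y+1) + b - ((a+1)+(y+1)) = x + b by omega]
    ring
  rw [hprod] at hc2
  exact pointwise_core a x y b (by omega) (by omega) (by omega) (by omega) (by omega)

/-- pointwise bound at index 0 -/
private lemma pointwise_nat_zero (k d s : ℕ) (hs : 1 ≤ s) (h2s : 2*s ≤ k) (h2d : k+1 ≤ 2*d)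
    (hd1 : d+1 ≤ k) :
    s.choose 0 * (k-s).choose d ≤ 2*(s.choose 1 * (k-s).choose (d-1)) := by
  by_cases h0 : (k-s).choose d = 0
  · rw [Nat.choose_zero_right, one_mul, h0]; exact Nat.zero_le _
  have hdk : d ≤ k - s := by
    by_contra h
    exact h0 (Nat.choose_eq_zero_of_lt (by omega))
  have hsd : s < d := by omega
  obtain ⟨y, rfl⟩ : ∃ y, d = y + 1 := ⟨d-1, by omega⟩
  obtain ⟨b, rfl⟩ : ∃ b, k = s + (y+1) + b := ⟨k - s - (y+1), by omega⟩
  rw [Nat.choose_zero_right, one_mul, Nat.choose_one_right]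
  rw [show s + (y+1) + b - s = y+1+b by omega, show y+1-1 = y by omega]
  exact pointwise_zero_core s y b hs (by omega)

private lemma geo_sum : ∀ (m : ℕ) (f : ℕ → ℝ), (∀ j, j < m → f (j+1) ≤ f j / 2) →
    (∀ j, 0 ≤ f j) → ∑ j ∈ range (m+1), f j ≤ 2 * f 0 := by
  intro m
  induction m with
  | zero => intro f _ h0; simp; linarith [h0 0]
  | succ m ih =>
    intro f h h0
    rw [Finset.sum_range_succ']
    have h1 : ∑ i ∈ range (m+1), f (i+1) ≤ 2 * f 1 :=
      ih (fun j => f (j+1)) (fun j hj => h (j+1) (by omega)) (fun j => h0 (j+1))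
    have h2 : f 1 ≤ f 0 / 2 := h 0 (by omega)
    linarith

private lemma half_step (k s r : ℕ) (hsk : s ≤ k) (hrk : r ≤ k - s) (hr : 2*s*r ≤ k-s-r) :
    ∀ j, j < r → ((s.choose (j+1) * (k-s).choose (r-(j+1)) : ℕ) : ℝ) ≤
      ((s.choose j * (k-s).choose (r-j) : ℕ) : ℝ) / 2 := by
  intro j hj
  by_cases hjs : j < s
  · have e1 := Nat.choose_succ_right_eq s j
    have e2 := Nat.choose_succ_right_eq (k-s) (r-j-1)
    rw [show r-j-1+1 = r-j by omega, show k-s-(r-j-1) = (k-s-(r-j))+1 by omega] at e2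
    have idA : (s.choose (j+1) * (k-s).choose (r-(j+1))) * ((j+1)*((k-s-(r-j))+1)) =
        (s.choose j * (k-s).choose (r-j)) * ((s-j)*(r-j)) := by
      rw [show r-(j+1) = r-j-1 by omega]
      calc s.choose (j+1) * (k-s).choose (r-j-1) * ((j+1)*((k-s-(r-j))+1))
          = (s.choose (j+1) * (j+1)) * ((k-s).choose (r-j-1) * ((k-s-(r-j))+1)) := by ring
        _ = (s.choose j * (s-j)) * ((k-s).choose (r-j) * (r-j)) := by rw [e1, ← e2]
        _ = s.choose j * (k-s).choose (r-j) * ((s-j)*(r-j)) := by ring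
    have hineq : 2*((s-j)*(r-j)) ≤ (j+1)*((k-s-(r-j))+1) := by
      have hb1 : (s-j)*(r-j) ≤ s*r := Nat.mul_le_mul (by omega) (by omega)
      have hb2 : k-s-r ≤ k-s-(r-j) := by omega
      calc 2*((s-j)*(r-j)) ≤ 2*(s*r) := by omega
        _ = 2*s*r := by ring
        _ ≤ k-s-r := hr
        _ ≤ (j+1)*((k-s-(r-j))+1) := by nlinarith [hb2]
    have hN : 2*(s.choose (j+1) * (k-s).choose (r-(j+1))) ≤ s.choose j * (k-s).choose (r-j) := by
      refine Nat.le_of_mul_le_mul_right ?_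
        (show 0 < (j+1)*((k-s-(r-j))+1) from Nat.mul_pos (by omega) (by omega))
      calc 2*(s.choose (j+1) * (k-s).choose (r-(j+1))) * ((j+1)*((k-s-(r-j))+1))
          = 2*((s.choose (j+1) * (k-s).choose (r-(j+1))) * ((j+1)*((k-s-(r-j))+1))) := by ring
        _ = 2*((s.choose j * (k-s).choose (r-j)) * ((s-j)*(r-j))) := by rw [idA]
        _ = (s.choose j * (k-s).choose (r-j)) * (2*((s-j)*(r-j))) := by ring
        _ ≤ (s.choose j * (k-s).choose (r-j)) * ((j+1)*((k-s-(r-j))+1)) :=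
            Nat.mul_le_mul_left _ hineq
    rw [le_div_iff₀ (by norm_num : (0:ℝ) < 2)]
    calc ((s.choose (j+1) * (k-s).choose (r-(j+1)) : ℕ) : ℝ) * 2
        = ((2*(s.choose (j+1) * (k-s).choose (r-(j+1))) : ℕ) : ℝ) := by push_cast; ring
      _ ≤ _ := Nat.cast_le.mpr hN
  · rw [Nat.choose_eq_zero_of_lt (show s < j+1 by omega), zero_mul]
    simp
    positivity

private lemma vdm (k s r : ℕ) (hs : s ≤ k) :
    ∑ i ∈ range (r+1), s.choose i * (k-s).choose (r-i) = k.choose r := by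
  have h := Nat.add_choose_eq s (k-s) r
  rw [Nat.add_sub_cancel' hs] at h
  rw [h, Finset.Nat.sum_antidiagonal_eq_sum_range_succ_mk]

set_option maxHeartbeats 1000000 in
/-- Lemma 1, case `d > k/2`: with `κ(s) = (k-s+1)/(2s+1)` and `α' = (d+1)/(k-d)`, the even
    part `I_d = Σ_{i even} C(s,i)C(k-s,d-i)` satisfies `I_d ≤ (1 - 2s/(5α'))C(k,d)` if
    `d > k - κ(s)`, and `I_d ≤ (4/5)C(k,d)` if `d ≤ k - κ(s)`. -/
theorem even_intersection_upper_bound_large_d (k d s : ℕ) (hk : 1 ≤ k)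
    (hs : 1 ≤ s) (hsk : (s : ℝ) ≤ (k : ℝ) / 2) (hd : (k : ℝ) / 2 < (d : ℝ)) (hdk : d ≤ k - 1) :
    ∀ (κ α' Id : ℝ),
      κ = ((k : ℝ) - s + 1) / (2 * (s : ℝ) + 1) →
      α' = ((d : ℝ) + 1) / ((k : ℝ) - d) →
      Id = ∑ i ∈ (Finset.range (d + 1)).filter (fun i => Even i),
        (s.choose i * (k - s).choose (d - i) : ℝ) →
      (((d : ℝ) > (k : ℝ) - κ → Id ≤ (1 - 2 * s / (5 * α')) * (k.choose d : ℝ)) ∧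
       ((d : ℝ) ≤ (k : ℝ) - κ → Id ≤ (4 / 5) * (k.choose d : ℝ))) := by
  intro κ α' Id hκ hα hId
  -- basic natural-number facts
  have h2s : 2*s ≤ k := by
    have h : ((2*s : ℕ) : ℝ) ≤ (k : ℝ) := by push_cast; linarith
    exact_mod_cast h
  have h2d : k+1 ≤ 2*d := by
    have h : (k : ℝ) < ((2*d : ℕ) : ℝ) := by push_cast; linarith
    have h2 : k < 2*d := by exact_mod_cast h
    omega
  have hd1 : d+1 ≤ k := by omega
  have hsd : s < d := by omega
  have hsk' : s ≤ k := by omega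
  have hdk' : d ≤ k := by omega
  have ht1 : 1 ≤ k-d := by omega
  have hkd : ((k-d : ℕ) : ℝ) = (k:ℝ) - d := by
    push_cast [Nat.cast_sub hdk']; ring
  -- the natural-valued term function
  set qN : ℕ → ℕ := fun i => s.choose i * (k-s).choose (d-i) with hqN
  have hId' : Id = ∑ i ∈ (range (d+1)).filter (fun i => Even i), (qN i : ℝ) := by
    rw [hId]
    refine Finset.sum_congr rfl fun i _ => ?_
    simp [hqN]
  set O : ℝ := ∑ i ∈ (range (d+1)).filter (fun i => ¬ Even i), (qN i : ℝ) with hO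
  have hq0 : ∀ i, (0:ℝ) ≤ (qN i : ℝ) := fun i => Nat.cast_nonneg _
  have hONN : 0 ≤ O := Finset.sum_nonneg fun i _ => hq0 i
  have hIO : Id + O = (k.choose d : ℝ) := by
    rw [hId', hO, Finset.sum_filter_add_sum_filter_not]
    rw [show ∑ i ∈ range (d+1), (qN i : ℝ) = ((∑ i ∈ range (d+1), qN i : ℕ) : ℝ) by push_cast; rfl]
    rw [hqN]
    norm_cast
    exact vdm k s d hsk'
  have hC0 : (0:ℝ) ≤ (k.choose d : ℝ) := Nat.cast_nonneg _
  constructor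
  · -- case 1 : d > k - κ
    intro hcase
    have hc1 : (k-d)*(2*s+1) + s ≤ k := by
      have h1 : ((k:ℝ) - d) * (2*s+1) < (k:ℝ) - s + 1 := by
        rw [hκ] at hcase
        have h2 : (0:ℝ) < 2*s+1 := by positivity
        have h3 : (k:ℝ) - d < ((k:ℝ) - s + 1)/(2*s+1) := by linarith
        calc ((k:ℝ) - d) * (2*s+1) < (((k:ℝ) - s + 1)/(2*s+1)) * (2*s+1) := by
              apply mul_lt_mul_of_pos_right h3 h2
          _ = (k:ℝ) - s + 1 := by field_simp
      have h4 : (((k-d)*(2*s+1) : ℕ) : ℝ) < ((k - s + 1 : ℕ) : ℝ) := by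
        push_cast [Nat.cast_sub hdk', Nat.cast_sub hsk']
        linarith
      have h5 : (k-d)*(2*s+1) < k - s + 1 := by exact_mod_cast h4
      omega
    have h2st : 2*s*(k-d) ≤ k-s-(k-d) := by
      have e : (k-d)*(2*s+1) = 2*s*(k-d) + (k-d) := by ring
      omega
    -- rewrite target coefficient
    have hα'rw : 2 * (s:ℝ) / (5 * α') = 2*(s:ℝ)*((k:ℝ)-d)/(5*((d:ℝ)+1)) := by
      rw [hα]
      have hkd0 : (k:ℝ) - d ≠ 0 := by
        have : (0:ℝ) < (k:ℝ) - d := by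
          rw [← hkd]; exact_mod_cast ht1
        linarith
      have hd0 : (d:ℝ) + 1 ≠ 0 := by positivity
      field_simp
    -- it suffices to bound O from below
    have hsuff : 2*(s:ℝ)*((k:ℝ)-d)/(5*((d:ℝ)+1)) * (k.choose d : ℝ) ≤ O →
        Id ≤ (1 - 2 * s / (5 * α')) * (k.choose d : ℝ) := by
      intro h
      rw [hα'rw]
      have : Id = (k.choose d : ℝ) - O := by linarith
      rw [this]
      have hexp : (1 - 2*(s:ℝ)*((k:ℝ)-d)/(5*((d:ℝ)+1))) * (k.choose d : ℝ)
          = (k.choose d : ℝ) - 2*(s:ℝ)*((k:ℝ)-d)/(5*((d:ℝ)+1)) * (k.choose d : ℝ) := by ring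
      rw [hexp]
      linarith
    apply hsuff
    -- Vandermonde at sample size r, halved
    have hhalf : ∀ r : ℕ, r ≤ k - s → 2*s*r ≤ k-s-r →
        ((k.choose r : ℕ) : ℝ) ≤ 2 * (((k-s).choose r : ℕ) : ℝ) := by
      intro r hr1 hr2
      have hv := vdm k s r hsk'
      have hg := geo_sum r (fun j => ((s.choose j * (k-s).choose (r-j) : ℕ) : ℝ))
        (fun j hj => half_step k s r hsk' hr1 hr2 j hj) (fun j => Nat.cast_nonneg _)
      have hsum : ((k.choose r : ℕ) : ℝ) = ∑ j ∈ range (r+1), ((s.choose j * (k-s).choose (r-j) : ℕ) : ℝ) := by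
        rw [← hv]; push_cast; rfl
      rw [hsum]
      simpa using hg
    rcases Nat.even_or_odd s with hse | hso
    · -- s even : use the term i = s-1
      have hs2 : 2 ≤ s := by
        rcases hse with ⟨c, hc⟩; omega
      have hmem : s-1 ∈ (range (d+1)).filter (fun i => ¬ Even i) := by
        simp only [mem_filter, mem_range]
        constructor
        · omega
        · intro hev
          rcases hse with ⟨c, hc⟩
          rcases hev with ⟨c', hc'⟩
          omega
      have hterm : (qN (s-1) : ℝ) ≤ O :=
        Finset.single_le_sum (fun i _ => hq0 i) hmem
      -- identify the term
      have hch1 : s.choose (s-1) = s := by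
        rw [Nat.choose_symm hs, Nat.choose_one_right]
      have hch2 : (k-s).choose (d-(s-1)) = (k-s).choose (k-d-1) := by
        rw [show d-(s-1) = (k-s) - (k-d-1) by omega]
        exact Nat.choose_symm (by omega)
      have hqval : (qN (s-1) : ℝ) = (s:ℝ) * (((k-s).choose (k-d-1) : ℕ) : ℝ) := by
        simp only [hqN]
        rw [hch1, hch2]
        push_cast; ring
      -- halved Vandermonde at r = k-d-1
      have hr2 : 2*s*(k-d-1) ≤ k-s-(k-d-1) := by
        have e : 2*s*(k-d-1) + 2*s*1 = 2*s*((k-d-1)+1) := by rw [← Nat.mul_add]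
        have e2 : (k-d-1)+1 = k-d := by omega
        rw [e2] at e
        omega
      have hhv := hhalf (k-d-1) (by omega) hr2
      -- Pascal : k.choose (k-d) * (k-d) = k.choose (k-d-1) * (d+1)
      have hpas : k.choose (k-d) * (k-d) = k.choose (k-d-1) * (d+1) := by
        have := Nat.choose_succ_right_eq k (k-d-1)
        rw [show k-d-1+1 = k-d by omega, show k - (k-d-1) = d+1 by omega] at this
        exact this
      have hsymC : k.choose (k-d) = k.choose d := Nat.choose_symm hdk'
      rw [hsymC] at hpas
      -- real versions
      have hpasR : (k.choose d : ℝ) * ((k:ℝ)-d) = ((k.choose (k-d-1) : ℕ) : ℝ) * ((d:ℝ)+1) := by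
        have h := congrArg (fun n : ℕ => (n : ℝ)) hpas
        push_cast at h
        rwa [hkd] at h
      have hdpos : (0:ℝ) < (d:ℝ)+1 := by positivity
      have hQnn : (0:ℝ) ≤ (((k-s).choose (k-d-1) : ℕ) : ℝ) := Nat.cast_nonneg _
      have hPnn : (0:ℝ) ≤ ((k.choose (k-d-1) : ℕ) : ℝ) := Nat.cast_nonneg _
      -- chain
      have hsQ : (s:ℝ) * (((k-s).choose (k-d-1) : ℕ) : ℝ) ≤ O := by
        rw [← hqval]; exact hterm
      rw [div_mul_eq_mul_div, div_le_iff₀ (by positivity : (0:ℝ) < 5*((d:ℝ)+1))]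
      have hLHS : 2*(s:ℝ)*((k:ℝ)-d)*(k.choose d : ℝ)
          = 2*((s:ℝ)*(((k.choose (k-d-1) : ℕ) : ℝ)*((d:ℝ)+1))) := by
        rw [← hpasR]; ring
      rw [hLHS]
      have c1 : (5*((d:ℝ)+1)) * ((s:ℝ)*(((k-s).choose (k-d-1) : ℕ) : ℝ)) ≤ (5*((d:ℝ)+1)) * O :=
        mul_le_mul_of_nonneg_left hsQ (by positivity)
      have c2 : (s:ℝ)*((k.choose (k-d-1) : ℕ) : ℝ) ≤ (s:ℝ)*(2*(((k-s).choose (k-d-1) : ℕ) : ℝ)) :=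
        mul_le_mul_of_nonneg_left hhv (Nat.cast_nonneg _)
      have c3 : ((d:ℝ)+1)*((s:ℝ)*((k.choose (k-d-1) : ℕ) : ℝ))
          ≤ ((d:ℝ)+1)*((s:ℝ)*(2*(((k-s).choose (k-d-1) : ℕ) : ℝ))) :=
        mul_le_mul_of_nonneg_left c2 (by positivity)
      have c4 : (0:ℝ) ≤ ((d:ℝ))*((s:ℝ)*(((k-s).choose (k-d-1) : ℕ) : ℝ)) := by positivity
      have c5 : (0:ℝ) ≤ (s:ℝ)*(((k-s).choose (k-d-1) : ℕ) : ℝ) := by positivity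
      linarith [c1, c3, c4, c5]
    · -- s odd : use the term i = s
      have hmem : s ∈ (range (d+1)).filter (fun i => ¬ Even i) := by
        simp only [mem_filter, mem_range]
        exact ⟨by omega, by rwa [Nat.not_even_iff_odd]⟩
      have hterm : (qN s : ℝ) ≤ O :=
        Finset.single_le_sum (fun i _ => hq0 i) hmem
      have hch2 : (k-s).choose (d-s) = (k-s).choose (k-d) := by
        rw [show d-s = (k-s) - (k-d) by omega]
        exact Nat.choose_symm (by omega)
      have hqval : (qN s : ℝ) = (((k-s).choose (k-d) : ℕ) : ℝ) := by
        simp only [hqN]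
        rw [Nat.choose_self, hch2, one_mul]
      have hhv := hhalf (k-d) (by omega) h2st
      have hsymC : k.choose (k-d) = k.choose d := Nat.choose_symm hdk'
      rw [hsymC] at hhv
      -- coefficient bound : 2s(k-d)/(5(d+1)) ≤ 1/2
      have hcoef : 4*s*(k-d) ≤ 5*(d+1) := by
        have e : 4*s*(k-d) = 2*(2*s*(k-d)) := by ring
        omega
      have hcoefR : 2*(s:ℝ)*((k:ℝ)-d)/(5*((d:ℝ)+1)) ≤ 1/2 := by
        rw [div_le_iff₀ (by positivity)]
        have h4 : ((4*s*(k-d) : ℕ) : ℝ) ≤ ((5*(d+1) : ℕ) : ℝ) := Nat.cast_le.mpr hcoef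
        push_cast [Nat.cast_sub hdk'] at h4
        linarith
      calc 2*(s:ℝ)*((k:ℝ)-d)/(5*((d:ℝ)+1)) * (k.choose d : ℝ)
          ≤ (1/2) * (k.choose d : ℝ) := mul_le_mul_of_nonneg_right hcoefR hC0
        _ ≤ (((k-s).choose (k-d) : ℕ) : ℝ) := by linarith
        _ = (qN s : ℝ) := hqval.symm
        _ ≤ O := hterm
  · -- case 2 : d ≤ k - κ
    intro hcase
    have hc2 : k + 1 ≤ (k-d)*(2*s+1) + s := by
      have h1 : (k:ℝ) - s + 1 ≤ ((k:ℝ) - d) * (2*s+1) := by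
        rw [hκ] at hcase
        have h2 : (0:ℝ) < 2*s+1 := by positivity
        have h3 : ((k:ℝ) - s + 1)/(2*s+1) ≤ (k:ℝ) - d := by linarith
        calc (k:ℝ) - s + 1 = (((k:ℝ) - s + 1)/(2*s+1)) * (2*s+1) := by field_simp
          _ ≤ ((k:ℝ) - d) * (2*s+1) := mul_le_mul_of_nonneg_right h3 (le_of_lt h2)
      have h4 : ((k - s + 1 : ℕ) : ℝ) ≤ (((k-d)*(2*s+1) : ℕ) : ℝ) := by
        push_cast [Nat.cast_sub hdk', Nat.cast_sub hsk']
        linarith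
      have h5 : k - s + 1 ≤ (k-d)*(2*s+1) := by exact_mod_cast h4
      omega
    set E := (range (d+1)).filter (fun i => Even i) with hE
    -- pointwise bound
    have hpt : ∀ i ∈ E, (qN i : ℝ) ≤
        2*(qN (i+1) : ℝ) + 2*(if i = 0 then (0:ℝ) else (qN (i-1) : ℝ)) := by
      intro i hi
      by_cases hi0 : i = 0
      · subst hi0
        simp only [if_pos rfl]
        have h := pointwise_nat_zero k d s hs h2s h2d hd1
        have h' : (qN 0 : ℝ) ≤ ((2*(s.choose 1 * (k-s).choose (d-1)) : ℕ) : ℝ) := by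
          apply Nat.cast_le.mpr
          simpa [hqN] using h
        have : (qN 1 : ℝ) = ((s.choose 1 * (k-s).choose (d-1) : ℕ) : ℝ) := by
          simp [hqN]
        rw [this]
        push_cast at h' ⊢
        linarith
      · rw [if_neg hi0]
        have h := pointwise_nat k d s hs h2s h2d hd1 hc2 i (by omega)
        have h' : ((s.choose i * (k-s).choose (d-i) : ℕ) : ℝ) ≤
            ((2*(s.choose (i-1) * (k-s).choose (d-(i-1)) + s.choose (i+1) * (k-s).choose (d-(i+1))) : ℕ) : ℝ) :=
          Nat.cast_le.mpr h
        push_cast at h'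
        simp only [hqN]
        push_cast
        linarith
    have hsum1 : Id ≤ ∑ i ∈ E, (2*(qN (i+1) : ℝ) + 2*(if i = 0 then (0:ℝ) else (qN (i-1) : ℝ))) := by
      rw [hId']
      exact Finset.sum_le_sum hpt
    have hsplit : ∑ i ∈ E, (2*(qN (i+1) : ℝ) + 2*(if i = 0 then (0:ℝ) else (qN (i-1) : ℝ)))
        = 2*(∑ i ∈ E, (qN (i+1) : ℝ)) + 2*(∑ i ∈ E, (if i = 0 then (0:ℝ) else (qN (i-1) : ℝ))) := by
      rw [Finset.sum_add_distrib, Finset.mul_sum, Finset.mul_sum]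
    -- first shifted sum
    have hA : ∑ i ∈ E, (qN (i+1) : ℝ) ≤ O := by
      rw [← Finset.sum_image (f := fun j => ((qN j : ℕ) : ℝ)) (g := (· + 1))
        (fun a _ b _ h => add_left_injective 1 h)]
      have hsub : E.image (· + 1) ⊆ (range (d+2)).filter (fun j => ¬ Even j) := by
        intro j hj
        simp only [Finset.mem_image, hE, mem_filter, mem_range] at hj
        obtain ⟨i, ⟨hir, hie⟩, rfl⟩ := hj
        simp only [mem_filter, mem_range]
        refine ⟨by omega, ?_⟩
        rw [Nat.even_add_one]
        simpa using hie
      have hle := Finset.sum_le_sum_of_subset_of_nonneg hsub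
        (fun j _ _ => hq0 j)
      refine hle.trans ?_
      -- sum over odd of range (d+2) equals O
      rw [Finset.range_add_one, Finset.filter_insert]
      by_cases hpar : Even (d+1)
      · rw [if_neg (by simpa using hpar)]
      · rw [if_pos (by simpa using hpar)]
        rw [Finset.sum_insert (by simp)]
        have : (qN (d+1) : ℝ) = 0 := by
          simp [hqN, Nat.choose_eq_zero_of_lt (show s < d+1 by omega)]
        rw [this, zero_add]
    -- second shifted sum
    have hB : ∑ i ∈ E, (if i = 0 then (0:ℝ) else (qN (i-1) : ℝ)) ≤ O := by
      have h1 : ∑ i ∈ E, (if i = 0 then (0:ℝ) else (qN (i-1) : ℝ))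
          = ∑ i ∈ E.filter (fun i => ¬ i = 0), (qN (i-1) : ℝ) := by
        conv_rhs => rw [Finset.sum_filter]
        refine Finset.sum_congr rfl fun i _ => ?_
        by_cases h : i = 0 <;> simp [h]
      rw [h1]
      have hinj : ∀ a ∈ E.filter (fun i => ¬ i = 0), ∀ b ∈ E.filter (fun i => ¬ i = 0),
          a - 1 = b - 1 → a = b := by
        intro a ha b hb h
        simp only [mem_filter] at ha hb
        omega
      rw [← Finset.sum_image (f := fun j => (qN j : ℝ)) (g := (· - 1)) hinj]
      have hsub : (E.filter (fun i => ¬ i = 0)).image (· - 1) ⊆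
          (range (d+1)).filter (fun j => ¬ Even j) := by
        intro j hj
        simp only [Finset.mem_image, hE, mem_filter, mem_range] at hj
        obtain ⟨i, ⟨⟨hir, hie⟩, hi0⟩, rfl⟩ := hj
        simp only [mem_filter, mem_range]
        refine ⟨by omega, ?_⟩
        intro hev
        rcases hie with ⟨c, hc⟩
        rcases hev with ⟨c', hc'⟩
        omega
      exact Finset.sum_le_sum_of_subset_of_nonneg hsub (fun j _ _ => hq0 j)
    have hfinal : Id ≤ 4 * O := by
      calc Id ≤ 2*(∑ i ∈ E, (qN (i+1) : ℝ)) + 2*(∑ i ∈ E, (if i = 0 then (0:ℝ) else (qN (i-1) : ℝ))) := by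
            rw [← hsplit]; exact hsum1
        _ ≤ 2*O + 2*O := by
            apply add_le_add
            · linarith [hA]
            · linarith [hB]
        _ = 4*O := by ring
    linarith
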